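/- Let L(t) = L₀ + vt with L₀ > 0 and |v| < 1, and define γ₀(t) = 1/L(t) and γ_ℓ(t) = ∑_{i=1}^{ℓ} (-1/(2i+1)!)·L(t)^{2i}·(d^{2i}γ_{ℓ-i}/dt^{2i})(t) for ℓ ≥ 1, on the domain L(t) > 0. Then γ_ℓ(t) = c_ℓ v^{2ℓ} / (L₀ + vt), where c₀ = 1 and c_ℓ = -∑_{i=1}^{ℓ} c_{ℓ-i}/(2i+1). -/

import Mathlib

open Filter in
lemma moore_aux (L₀ v a : ℝ) : ∀ n : ℕ, ∀ t : ℝ, L₀ + v * t ≠ 0 →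
    iteratedDeriv n (fun s => a / (L₀ + v * s)) t
      = a * (-1) ^ n * n.factorial * v ^ n / (L₀ + v * t) ^ (n + 1) := by
  intro n
  induction n with
  | zero => intro t ht; simp
  | succ n ih =>
    intro t ht
    rw [iteratedDeriv_succ]
    have hopen : IsOpen {s : ℝ | L₀ + v * s ≠ 0} :=
      isOpen_ne_fun (by continuity) continuous_const
    have heq : iteratedDeriv n (fun s => a / (L₀ + v * s)) =ᶠ[nhds t]
        fun s => a * (-1) ^ n * n.factorial * v ^ n / (L₀ + v * s) ^ (n + 1) :=
      Filter.eventuallyEq_of_mem (hopen.mem_nhds ht) (fun s hs => ih s hs)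
    rw [heq.deriv_eq]
    have hlin : HasDerivAt (fun s : ℝ => L₀ + v * s) v t := by
      simpa using ((hasDerivAt_id t).const_mul v).const_add L₀
    have hpow : HasDerivAt (fun s : ℝ => (L₀ + v * s) ^ (n + 1))
        (((n : ℝ) + 1) * (L₀ + v * t) ^ n * v) t := by
      have := hlin.fun_pow (n + 1)
      simpa using this
    have hne : (L₀ + v * t) ^ (n + 1) ≠ 0 := pow_ne_zero _ ht
    have hinv := hpow.inv hne
    have hd := hinv.const_mul (a * (-1) ^ n * n.factorial * v ^ n)
    have : deriv (fun s => a * (-1) ^ n * (n.factorial : ℝ) * v ^ n / (L₀ + v * s) ^ (n + 1)) t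
        = a * (-1) ^ n * n.factorial * v ^ n *
          (-(((n : ℝ) + 1) * (L₀ + v * t) ^ n * v) / ((L₀ + v * t) ^ (n + 1)) ^ 2) := by
      simpa [div_eq_mul_inv] using hd.deriv
    rw [this, Nat.factorial_succ]
    push_cast
    field_simp
    ring

theorem moore_gamma_linear (L₀ v : ℝ) (hL : 0 < L₀) (hv : |v| < 1)
    (γ : ℕ → ℝ → ℝ) (c : ℕ → ℝ)
    (hγ0 : ∀ t : ℝ, 0 < L₀ + v * t → γ 0 t = 1 / (L₀ + v * t))
    (hγ : ∀ ℓ : ℕ, 1 ≤ ℓ → ∀ t : ℝ, 0 < L₀ + v * t →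
      γ ℓ t = ∑ i ∈ Finset.Icc 1 ℓ,
        (-1 / (Nat.factorial (2 * i + 1)) : ℝ) * (L₀ + v * t) ^ (2 * i) * iteratedDeriv (2 * i) (γ (ℓ - i)) t)
    (hc0 : c 0 = 1)
    (hcrec : ∀ ℓ : ℕ, 1 ≤ ℓ → c ℓ = -∑ i ∈ Finset.Icc 1 ℓ, c (ℓ - i) / (2 * (i : ℝ) + 1)) :
    ∀ ℓ : ℕ, ∀ t : ℝ, 0 < L₀ + v * t → γ ℓ t = c ℓ * v ^ (2 * ℓ) / (L₀ + v * t) := by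
  intro ℓ
  induction ℓ using Nat.strong_induction_on with
  | _ ℓ ih =>
  intro t ht
  match ℓ with
  | 0 => rw [hγ0 t ht, hc0]; simp
  | (m + 1) =>
    rw [hγ (m + 1) (by omega) t ht]
    have hopen : IsOpen {s : ℝ | 0 < L₀ + v * s} := isOpen_lt continuous_const (by continuity)
    have key : ∀ i ∈ Finset.Icc 1 (m + 1),
        (-1 / (Nat.factorial (2 * i + 1)) : ℝ) * (L₀ + v * t) ^ (2 * i) *
          iteratedDeriv (2 * i) (γ (m + 1 - i)) t
        = -(c (m + 1 - i) / (2 * (i : ℝ) + 1)) * v ^ (2 * (m + 1)) / (L₀ + v * t) := by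
      intro i hi
      simp only [Finset.mem_Icc] at hi
      have heq : γ (m + 1 - i) =ᶠ[nhds t]
          fun s => (c (m + 1 - i) * v ^ (2 * (m + 1 - i))) / (L₀ + v * s) :=
        Filter.eventuallyEq_of_mem (hopen.mem_nhds ht)
          (fun s hs => ih (m + 1 - i) (by omega) s hs)
      rw [heq.iteratedDeriv_eq (2 * i),
        moore_aux L₀ v _ (2 * i) t (ne_of_gt ht)]
      have hsign : ((-1 : ℝ)) ^ (2 * i) = 1 := by
        rw [pow_mul]; norm_num
      have hvpow : v ^ (2 * (m + 1 - i)) * v ^ (2 * i) = v ^ (2 * (m + 1)) := by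
        rw [← pow_add]; congr 1; omega
      have hfact : ((2 * i + 1).factorial : ℝ) = (2 * (i : ℝ) + 1) * ((2 * i).factorial : ℝ) := by
        rw [Nat.factorial_succ]; push_cast; ring
      have hLne : (L₀ + v * t) ≠ 0 := ne_of_gt ht
      have hfne : ((2 * i).factorial : ℝ) ≠ 0 := by positivity
      have h2i1 : (2 * (i : ℝ) + 1) ≠ 0 := by positivity
      rw [hfact, hsign]
      rw [← hvpow]
      field_simp
      ring
    rw [Finset.sum_congr rfl key, hcrec (m + 1) (by omega)]
    rw [← Finset.sum_div, ← Finset.sum_mul, Finset.sum_neg_distrib]
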